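/- Let z, w, f, g ∈ ℝ^m with f, g ≥ 0 entrywise, and X, Z ∈ ℝ^{m×m} with zero diagonals and nonpositive off-diagonal entries, satisfying: P_d(w(z-w)ᵀ) = P_d(𝟙fᵀ + g𝟙ᵀ), P_od(w(z-w)ᵀ) = P_od(X - Z), and P_od(X + Z) = -P_od(𝟙fᵀ + g𝟙ᵀ). Then for all i ≠ j: (w_i + w_j)((z_i + z_j) - (w_i + w_j)) ≥ 0 and (w_i - w_j)((z_i - z_j) - (w_i - w_j)) ≥ 0, and for all i: w_i(z_i - w_i) ≥ 0. -/
import Mathlib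


open Matrix

/-- Diagonal-part projection: keep diagonal entries, zero elsewhere. -/
def Pd {m : ℕ} (M : Matrix (Fin m) (Fin m) ℝ) : Matrix (Fin m) (Fin m) ℝ :=
  Matrix.of fun i j => if i = j then M i j else 0

/-- Off-diagonal-part projection. -/
def Pod {m : ℕ} (M : Matrix (Fin m) (Fin m) ℝ) : Matrix (Fin m) (Fin m) ℝ :=
  M - Pd M

/-- Symmetric incremental slope[0,1] conditions from the odd-case dual decomposition. -/
theorem stmt_16 {m : ℕ} (z w f g : Fin m → ℝ)
    (hf : ∀ i, 0 ≤ f i) (hg : ∀ i, 0 ≤ g i)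
    (X Z : Matrix (Fin m) (Fin m) ℝ)
    (hXd : ∀ i, X i i = 0) (hXod : ∀ i j, i ≠ j → X i j ≤ 0)
    (hZd : ∀ i, Z i i = 0) (hZod : ∀ i j, i ≠ j → Z i j ≤ 0)
    (h1 : Pd (vecMulVec w (z - w)) =
      Pd (vecMulVec (fun _ => (1 : ℝ)) f + vecMulVec g (fun _ => (1 : ℝ))))
    (h2 : Pod (vecMulVec w (z - w)) = Pod (X - Z))
    (h3 : Pod (X + Z) =
      -Pod (vecMulVec (fun _ => (1 : ℝ)) f + vecMulVec g (fun _ => (1 : ℝ)))) :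
    (∀ i j, i ≠ j → 0 ≤ (w i + w j) * ((z i + z j) - (w i + w j))) ∧
    (∀ i j, i ≠ j → 0 ≤ (w i - w j) * ((z i - z j) - (w i - w j))) ∧
    (∀ i, 0 ≤ w i * (z i - w i)) := by

  have hd : ∀ i, w i * (z i - w i) = f i + g i := by
    intro i
    have := congrFun (congrFun h1 i) i
    simpa [Pd, vecMulVec, Pi.sub_apply] using this
  have hod : ∀ i j, i ≠ j → w i * (z j - w j) = X i j - Z i j := by
    intro i j hij
    have := congrFun (congrFun h2 i) j
    simpa [Pod, Pd, vecMulVec, Pi.sub_apply, hij] using this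
  have hxz : ∀ i j, i ≠ j → X i j + Z i j = -(f j + g i) := by
    intro i j hij
    have := congrFun (congrFun h3 i) j
    simpa [Pod, Pd, vecMulVec, hij] using this
  refine ⟨?_, ?_, ?_⟩
  · intro i j hij
    have h1' := hd i; have h2' := hd j
    have h3' := hod i j hij; have h4' := hod j i hij.symm
    have h5' := hxz i j hij; have h6' := hxz j i hij.symm
    have hZ1 := hZod i j hij; have hZ2 := hZod j i hij.symm
    nlinarith [hf i, hf j, hg i, hg j]
  · intro i j hij
    have h1' := hd i; have h2' := hd j
    have h3' := hod i j hij; have h4' := hod j i hij.symm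
    have h5' := hxz i j hij; have h6' := hxz j i hij.symm
    have hX1 := hXod i j hij; have hX2 := hXod j i hij.symm
    nlinarith [hf i, hf j, hg i, hg j]
  · intro i
    have := hd i
    nlinarith [hf i, hg i]
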